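/- Let K be a field of characteristic zero and let A be the quotient of the free (noncommutative) K-algebra K⟨β,γ⟩ by the two-sided ideal generated by γ³ − β² and βγ + γβ. Then A is a K-vector space of dimension 9. -/

import Mathlib

noncomputable section
open FreeAlgebra

/-- The relations `γ³ − β² = 0` and `βγ + γβ = 0` on the free algebra `K⟨β,γ⟩`
(`β = ι 0`, `γ = ι 1`). -/
inductive ConRel (K : Type*) [Field K] :
    FreeAlgebra K (Fin 2) → FreeAlgebra K (Fin 2) → Prop
  | r1 : ConRel K ((ι K (1 : Fin 2))^3 - (ι K (0 : Fin 2))^2) 0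
  | r2 : ConRel K
      (ι K (0 : Fin 2) * ι K (1 : Fin 2) + ι K (1 : Fin 2) * ι K (0 : Fin 2)) 0

namespace LauferAux

variable (K : Type*) [Field K]

/-- Index set for the monomial basis `β^a γ^b`. -/
abbrev I3 := Fin 3 × Fin 3

/-- The underlying 9-dimensional vector space of the regular representation. -/
abbrev V := I3 → K

/-- Action of `β` in the regular representation. -/
def lβ : V K →ₗ[K] V K where
  toFun v p := if p.1 = 0 then 0 else v (p.1 - 1, p.2)
  map_add' v w := by funext p; dsimp; first | (split <;> simp) | simp
  map_smul' c v := by funext p; dsimp; first | (split <;> simp) | simp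

/-- Action of `γ` in the regular representation. -/
def lγ : V K →ₗ[K] V K where
  toFun v p :=
    (if p.2 = 0 then 0 else (-1 : K) ^ (p.1 : ℕ) * v (p.1, p.2 - 1)) +
    (if p.1 = 2 ∧ p.2 = 0 then v (0, 2) else 0)
  map_add' v w := by
    funext p; dsimp; split <;> split <;> (try simp) <;> (try ring)
  map_smul' c v := by
    funext p; dsimp; split <;> split <;> (try simp) <;> (try ring)

lemma rel3 : lγ K * lγ K * lγ K = lβ K * lβ K := by
  apply LinearMap.ext; intro v
  funext p
  fin_cases p <;>
    simp [Module.End.mul_apply, lβ, lγ] <;> ring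

lemma rel_anti : lβ K * lγ K + lγ K * lβ K = 0 := by
  apply LinearMap.ext; intro v
  funext p
  fin_cases p <;>
    simp [Module.End.mul_apply, lβ, lγ] <;> ring

/-- The representation of the free algebra. -/
def F : FreeAlgebra K (Fin 2) →ₐ[K] Module.End K (V K) :=
  FreeAlgebra.lift K ![lβ K, lγ K]

lemma F_rel : ∀ ⦃x y⦄, ConRel K x y → F K x = F K y := by
  intro x y h
  cases h with
  | r1 =>
      have h1 : F K (ι K (1 : Fin 2)) = lγ K := by simp [F]
      have h0 : F K (ι K (0 : Fin 2)) = lβ K := by simp [F]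
      simp only [map_sub, map_pow, map_zero, h1, h0, sub_eq_zero]
      rw [pow_succ, pow_succ, pow_one, pow_two]
      exact rel3 K
  | r2 =>
      have h1 : F K (ι K (1 : Fin 2)) = lγ K := by simp [F]
      have h0 : F K (ι K (0 : Fin 2)) = lβ K := by simp [F]
      simp only [map_add, map_mul, map_zero, h0, h1]
      exact rel_anti K

/-- The representation of the contraction algebra. -/
def Φ : RingQuot (ConRel K) →ₐ[K] Module.End K (V K) :=
  RingQuot.liftAlgHom K ⟨F K, F_rel K⟩

/-- Images of the generators. -/
def bb : RingQuot (ConRel K) := RingQuot.mkAlgHom K (ConRel K) (ι K (0 : Fin 2))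
def gg : RingQuot (ConRel K) := RingQuot.mkAlgHom K (ConRel K) (ι K (1 : Fin 2))

/-- The monomial family `β^a γ^b`. -/
def m (p : I3) : RingQuot (ConRel K) := bb K ^ (p.1 : ℕ) * gg K ^ (p.2 : ℕ)

lemma Φ_bb : Φ K (bb K) = lβ K := by
  simp [Φ, bb, RingQuot.liftAlgHom_mkAlgHom_apply, F]

lemma Φ_gg : Φ K (gg K) = lγ K := by
  simp [Φ, gg, RingQuot.liftAlgHom_mkAlgHom_apply, F]

/-! Specialized algebra lemmas for `RingQuot (ConRel K)`, restated so that the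
instance paths match syntactically (the generic simp lemmas fail to match due
to the irreducible instances on `RingQuot`). -/

lemma nm (x y : RingQuot (ConRel K)) : -x * y = -(x * y) := neg_mul x y
lemma mn (x y : RingQuot (ConRel K)) : x * -y = -(x * y) := mul_neg x y
lemma nn (x : RingQuot (ConRel K)) : - -x = x := neg_neg x
lemma masc (x y z : RingQuot (ConRel K)) : x * y * z = x * (y * z) := mul_assoc x y z
lemma p0 (x : RingQuot (ConRel K)) : x ^ 0 = 1 := pow_zero x
lemma p1 (x : RingQuot (ConRel K)) : x ^ 1 = x := pow_one x
lemma p2 (x : RingQuot (ConRel K)) : x ^ 2 = x * x := pow_two x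
lemma om (x : RingQuot (ConRel K)) : 1 * x = x := one_mul x
lemma mo (x : RingQuot (ConRel K)) : x * 1 = x := mul_one x

lemma rel1' : gg K ^ 3 = bb K ^ 2 := by
  have := RingQuot.mkAlgHom_rel K (ConRel.r1 (K := K))
  simpa [sub_eq_zero, bb, gg, map_sub, map_pow] using this

lemma rel2' : bb K * gg K = -(gg K * bb K) := by
  have := RingQuot.mkAlgHom_rel K (ConRel.r2 (K := K))
  have h : bb K * gg K + gg K * bb K = 0 := by
    simpa [bb, gg, map_add, map_mul] using this
  exact eq_neg_of_add_eq_zero_left h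

lemma gb : gg K * bb K = -(bb K * gg K) := by
  rw [rel2', nn]

lemma g3 : gg K * (gg K * gg K) = bb K * bb K := by
  have h := rel1' K
  rwa [pow_succ', pow_two, pow_two] at h

/-- Move a `γ` past a `β` in a right-associated word. -/
lemma swap (x : RingQuot (ConRel K)) :
    gg K * (bb K * x) = -(bb K * (gg K * x)) := by
  rw [← masc, gb, nm, masc]

section CharZeroPart
variable [CharZero K]

lemma b3 : bb K * (bb K * bb K) = 0 := by
  have h1 : gg K * (gg K * (gg K * bb K)) = bb K * (bb K * bb K) := by
    calc gg K * (gg K * (gg K * bb K)) = (gg K * (gg K * gg K)) * bb K := by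
          simp only [masc]
    _ = (bb K * bb K) * bb K := by rw [g3]
    _ = bb K * (bb K * bb K) := by simp only [masc]
  have h2 : gg K * (gg K * (gg K * bb K)) = -(bb K * (bb K * bb K)) := by
    calc gg K * (gg K * (gg K * bb K))
        = gg K * (gg K * (-(bb K * gg K))) := by rw [gb]
    _ = -(gg K * (gg K * (bb K * gg K))) := by simp only [mn]
    _ = -(gg K * (-(bb K * (gg K * gg K)))) := by rw [swap]
    _ = gg K * (bb K * (gg K * gg K)) := by simp only [mn, nn]
    _ = -(bb K * (gg K * (gg K * gg K))) := swap K _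
    _ = -(bb K * (bb K * bb K)) := by rw [g3]
  have hneg : bb K * (bb K * bb K) = -(bb K * (bb K * bb K)) := h1.symm.trans h2
  have h0 : (2 : K) • (bb K * (bb K * bb K)) = 0 := by
    rw [two_smul]
    nth_rewrite 2 [hneg]
    exact add_neg_cancel _
  have h2ne : (2 : K) ≠ 0 := by norm_num
  have := congrArg (fun y => (2 : K)⁻¹ • y) h0
  simpa [smul_smul, inv_mul_cancel₀ h2ne] using this

lemma bcube (x : RingQuot (ConRel K)) : bb K * (bb K * (bb K * x)) = 0 := by
  rw [show bb K * (bb K * (bb K * x)) = (bb K * (bb K * bb K)) * x by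
    simp only [masc], b3, zero_mul]

/-- The span of the nine monomials. -/
def S : Submodule K (RingQuot (ConRel K)) := Submodule.span K (Set.range (m K))

lemma m_mem (p : I3) : m K p ∈ S K := Submodule.subset_span ⟨p, rfl⟩

lemma one_mem_S : (1 : RingQuot (ConRel K)) ∈ S K := by
  have := m_mem K ((0 : Fin 3), (0 : Fin 3))
  simpa [m] using this

lemma mul_bb_mem (p : I3) : bb K * m K p ∈ S K := by
  fin_cases p
  · show bb K * (bb K ^ 0 * gg K ^ 0) ∈ S K
    rw [show bb K * (bb K ^ 0 * gg K ^ 0) = bb K ^ 1 * gg K ^ 0 by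
      simp only [p0, p1, om, mo]]
    exact m_mem K ((1 : Fin 3), (0 : Fin 3))
  · show bb K * (bb K ^ 0 * gg K ^ 1) ∈ S K
    rw [show bb K * (bb K ^ 0 * gg K ^ 1) = bb K ^ 1 * gg K ^ 1 by
      simp only [p0, p1, om]]
    exact m_mem K ((1 : Fin 3), (1 : Fin 3))
  · show bb K * (bb K ^ 0 * gg K ^ 2) ∈ S K
    rw [show bb K * (bb K ^ 0 * gg K ^ 2) = bb K ^ 1 * gg K ^ 2 by
      simp only [p0, p1, om]]
    exact m_mem K ((1 : Fin 3), (2 : Fin 3))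
  · show bb K * (bb K ^ 1 * gg K ^ 0) ∈ S K
    rw [show bb K * (bb K ^ 1 * gg K ^ 0) = bb K ^ 2 * gg K ^ 0 by
      simp only [p0, p1, p2, mo]]
    exact m_mem K ((2 : Fin 3), (0 : Fin 3))
  · show bb K * (bb K ^ 1 * gg K ^ 1) ∈ S K
    rw [show bb K * (bb K ^ 1 * gg K ^ 1) = bb K ^ 2 * gg K ^ 1 by
      simp only [p1, p2, masc]]
    exact m_mem K ((2 : Fin 3), (1 : Fin 3))
  · show bb K * (bb K ^ 1 * gg K ^ 2) ∈ S K
    rw [show bb K * (bb K ^ 1 * gg K ^ 2) = bb K ^ 2 * gg K ^ 2 by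
      simp only [p1, p2, masc]]
    exact m_mem K ((2 : Fin 3), (2 : Fin 3))
  · show bb K * (bb K ^ 2 * gg K ^ 0) ∈ S K
    rw [show bb K * (bb K ^ 2 * gg K ^ 0) = bb K * (bb K * (bb K * 1)) by
      simp only [p0, p2, masc], bcube]
    exact (S K).zero_mem
  · show bb K * (bb K ^ 2 * gg K ^ 1) ∈ S K
    rw [show bb K * (bb K ^ 2 * gg K ^ 1) = bb K * (bb K * (bb K * gg K ^ 1)) by
      simp only [p2, masc], bcube]
    exact (S K).zero_mem
  · show bb K * (bb K ^ 2 * gg K ^ 2) ∈ S K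
    rw [show bb K * (bb K ^ 2 * gg K ^ 2) = bb K * (bb K * (bb K * gg K ^ 2)) by
      simp only [p2, masc], bcube]
    exact (S K).zero_mem

lemma mul_gg_mem (p : I3) : gg K * m K p ∈ S K := by
  fin_cases p
  -- (0,0)
  · show gg K * (bb K ^ 0 * gg K ^ 0) ∈ S K
    rw [show gg K * (bb K ^ 0 * gg K ^ 0) = bb K ^ 0 * gg K ^ 1 by
      simp only [p0, p1, om, mo]]
    exact m_mem K ((0 : Fin 3), (1 : Fin 3))
  -- (0,1)
  · show gg K * (bb K ^ 0 * gg K ^ 1) ∈ S K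
    rw [show gg K * (bb K ^ 0 * gg K ^ 1) = bb K ^ 0 * gg K ^ 2 by
      simp only [p0, p1, p2, om]]
    exact m_mem K ((0 : Fin 3), (2 : Fin 3))
  -- (0,2)
  · show gg K * (bb K ^ 0 * gg K ^ 2) ∈ S K
    rw [show gg K * (bb K ^ 0 * gg K ^ 2) = gg K * (gg K * gg K) by
      simp only [p0, p2, om], g3,
      show bb K * bb K = bb K ^ 2 * gg K ^ 0 by simp only [p0, p2, mo]]
    exact m_mem K ((2 : Fin 3), (0 : Fin 3))
  -- (1,0)
  · show gg K * (bb K ^ 1 * gg K ^ 0) ∈ S K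
    rw [show gg K * (bb K ^ 1 * gg K ^ 0) = gg K * bb K by
      simp only [p0, p1, mo], gb,
      show bb K * gg K = bb K ^ 1 * gg K ^ 1 by simp only [p1]]
    exact (S K).neg_mem (m_mem K ((1 : Fin 3), (1 : Fin 3)))
  -- (1,1)
  · show gg K * (bb K ^ 1 * gg K ^ 1) ∈ S K
    rw [show gg K * (bb K ^ 1 * gg K ^ 1) = gg K * (bb K * gg K) by
      simp only [p1], swap,
      show bb K * (gg K * gg K) = bb K ^ 1 * gg K ^ 2 by simp only [p1, p2]]
    exact (S K).neg_mem (m_mem K ((1 : Fin 3), (2 : Fin 3)))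
  -- (1,2)
  · show gg K * (bb K ^ 1 * gg K ^ 2) ∈ S K
    rw [show gg K * (bb K ^ 1 * gg K ^ 2) = gg K * (bb K * (gg K * gg K)) by
      simp only [p1, p2], swap, g3, b3, neg_zero]
    exact (S K).zero_mem
  -- (2,0)
  · show gg K * (bb K ^ 2 * gg K ^ 0) ∈ S K
    have e : gg K * (bb K ^ 2 * gg K ^ 0) = bb K ^ 2 * gg K ^ 1 := by
      calc gg K * (bb K ^ 2 * gg K ^ 0)
          = gg K * (bb K * bb K) := by simp only [p0, p2, mo]
      _ = -(bb K * (gg K * bb K)) := swap K _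
      _ = -(bb K * (-(bb K * gg K))) := by rw [gb]
      _ = bb K * (bb K * gg K) := by simp only [mn, nn]
      _ = bb K ^ 2 * gg K ^ 1 := by simp only [p1, p2, masc]
    rw [e]
    exact m_mem K ((2 : Fin 3), (1 : Fin 3))
  -- (2,1)
  · show gg K * (bb K ^ 2 * gg K ^ 1) ∈ S K
    have e : gg K * (bb K ^ 2 * gg K ^ 1) = bb K ^ 2 * gg K ^ 2 := by
      calc gg K * (bb K ^ 2 * gg K ^ 1)
          = gg K * (bb K * (bb K * gg K)) := by simp only [p1, p2, masc]
      _ = -(bb K * (gg K * (bb K * gg K))) := swap K _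
      _ = -(bb K * (-(bb K * (gg K * gg K)))) := by rw [swap]
      _ = bb K * (bb K * (gg K * gg K)) := by simp only [mn, nn]
      _ = bb K ^ 2 * gg K ^ 2 := by simp only [p2, masc]
    rw [e]
    exact m_mem K ((2 : Fin 3), (2 : Fin 3))
  -- (2,2)
  · show gg K * (bb K ^ 2 * gg K ^ 2) ∈ S K
    have e : gg K * (bb K ^ 2 * gg K ^ 2) = 0 := by
      calc gg K * (bb K ^ 2 * gg K ^ 2)
          = gg K * (bb K * (bb K * (gg K * gg K))) := by simp only [p2, masc]
      _ = -(bb K * (gg K * (bb K * (gg K * gg K)))) := swap K _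
      _ = -(bb K * (-(bb K * (gg K * (gg K * gg K))))) := by rw [swap]
      _ = bb K * (bb K * (gg K * (gg K * gg K))) := by simp only [mn, nn]
      _ = bb K * (bb K * (bb K * bb K)) := by rw [g3]
      _ = 0 := bcube K (bb K)
    rw [e]
    exact (S K).zero_mem

lemma mul_mem_S_of_gen (x : RingQuot (ConRel K))
    (hx : x = bb K ∨ x = gg K) {s : RingQuot (ConRel K)} (hs : s ∈ S K) :
    x * s ∈ S K := by
  have key : S K ≤ (S K).comap (LinearMap.mulLeft K x) := by
    rw [S, Submodule.span_le]
    rintro _ ⟨p, rfl⟩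
    cases hx with
    | inl h => subst h; exact mul_bb_mem K p
    | inr h => subst h; exact mul_gg_mem K p
  exact key hs

lemma mk_mul_mem (y : FreeAlgebra K (Fin 2)) :
    ∀ s ∈ S K, RingQuot.mkAlgHom K (ConRel K) y * s ∈ S K := by
  induction y using FreeAlgebra.induction with
  | grade0 r =>
      intro s hs
      rw [AlgHom.commutes, ← Algebra.smul_def]
      exact (S K).smul_mem r hs
  | grade1 i =>
      intro s hs
      fin_cases i
      · exact mul_mem_S_of_gen K _ (Or.inl rfl) hs
      · exact mul_mem_S_of_gen K _ (Or.inr rfl) hs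
  | mul y z hy hz =>
      intro s hs
      rw [map_mul, masc]
      exact hy _ (hz s hs)
  | add y z hy hz =>
      intro s hs
      rw [map_add, add_mul]
      exact (S K).add_mem (hy s hs) (hz s hs)

lemma span_top : S K = ⊤ := by
  rw [Submodule.eq_top_iff']
  intro x
  obtain ⟨y, rfl⟩ := RingQuot.mkAlgHom_surjective K (ConRel K) x
  have := mk_mul_mem K y 1 (one_mem_S K)
  simpa using this

/-- The cyclic vector of the regular representation. -/
def e0 : V K := Pi.single ((0 : Fin 3), (0 : Fin 3)) 1

lemma lγ_e0 : lγ K (e0 K) = Pi.single ((0 : Fin 3), (1 : Fin 3)) 1 := by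
  funext q
  fin_cases q <;> simp [lγ, e0, Pi.single_apply]

lemma lγ_e01 : lγ K (Pi.single ((0 : Fin 3), (1 : Fin 3)) 1) =
    Pi.single ((0 : Fin 3), (2 : Fin 3)) 1 := by
  funext q
  fin_cases q <;> simp [lγ, Pi.single_apply]

lemma lβ_single0 (b : Fin 3) : lβ K (Pi.single ((0 : Fin 3), b) 1) =
    Pi.single ((1 : Fin 3), b) 1 := by
  funext q
  fin_cases q <;> fin_cases b <;> simp [lβ, Pi.single_apply]

lemma lβ_single1 (b : Fin 3) : lβ K (Pi.single ((1 : Fin 3), b) 1) =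
    Pi.single ((2 : Fin 3), b) 1 := by
  funext q
  fin_cases q <;> fin_cases b <;> simp [lβ, Pi.single_apply]

lemma Phi_m (p : I3) : (Φ K (m K p)) (e0 K) = Pi.single p 1 := by
  have hΦ : Φ K (m K p) = lβ K ^ (p.1 : ℕ) * lγ K ^ (p.2 : ℕ) := by
    rw [m, map_mul, map_pow, map_pow, Φ_bb, Φ_gg]
  rw [hΦ]
  have e00 : e0 K = Pi.single ((0 : Fin 3), (0 : Fin 3)) 1 := rfl
  fin_cases p
  · show (lβ K ^ 0 * lγ K ^ 0) (e0 K) = Pi.single ((0 : Fin 3), (0 : Fin 3)) 1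
    simp [e00]
  · show (lβ K ^ 0 * lγ K ^ 1) (e0 K) = Pi.single ((0 : Fin 3), (1 : Fin 3)) 1
    simp [lγ_e0]
  · show (lβ K ^ 0 * lγ K ^ 2) (e0 K) = Pi.single ((0 : Fin 3), (2 : Fin 3)) 1
    simp [pow_two, Module.End.mul_apply, lγ_e0, lγ_e01]
  · show (lβ K ^ 1 * lγ K ^ 0) (e0 K) = Pi.single ((1 : Fin 3), (0 : Fin 3)) 1
    simp [Module.End.mul_apply, e00, lβ_single0, ← Prod.mk_zero_zero, ← Prod.mk_one_one]
  · show (lβ K ^ 1 * lγ K ^ 1) (e0 K) = Pi.single ((1 : Fin 3), (1 : Fin 3)) 1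
    simp [Module.End.mul_apply, lγ_e0, lβ_single0]
  · show (lβ K ^ 1 * lγ K ^ 2) (e0 K) = Pi.single ((1 : Fin 3), (2 : Fin 3)) 1
    simp [pow_two, Module.End.mul_apply, lγ_e0, lγ_e01, lβ_single0]
  · show (lβ K ^ 2 * lγ K ^ 0) (e0 K) = Pi.single ((2 : Fin 3), (0 : Fin 3)) 1
    simp [pow_two, Module.End.mul_apply, e00, lβ_single0, lβ_single1, ← Prod.mk_zero_zero, ← Prod.mk_one_one]
  · show (lβ K ^ 2 * lγ K ^ 1) (e0 K) = Pi.single ((2 : Fin 3), (1 : Fin 3)) 1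
    simp [pow_two, Module.End.mul_apply, lγ_e0, lβ_single0, lβ_single1, ← Prod.mk_zero_zero, ← Prod.mk_one_one]
  · show (lβ K ^ 2 * lγ K ^ 2) (e0 K) = Pi.single ((2 : Fin 3), (2 : Fin 3)) 1
    simp [pow_two, Module.End.mul_apply, lγ_e0, lγ_e01, lβ_single0, lβ_single1]

lemma single_li : LinearIndependent K (fun p : I3 => (Pi.single p 1 : V K)) := by
  have h := (Pi.basisFun K I3).linearIndependent
  have e : ⇑(Pi.basisFun K I3) = fun p : I3 => (Pi.single p 1 : V K) :=
    funext fun p => by simp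
  rwa [e] at h

lemma m_li : LinearIndependent K (m K) := by
  let L : RingQuot (ConRel K) →ₗ[K] V K :=
    { toFun := fun x => Φ K x (e0 K)
      map_add' := by intro x y; simp [map_add]
      map_smul' := by intro c x; simp [map_smul] }
  apply LinearIndependent.of_comp L
  have he : (⇑L ∘ m K) = fun p : I3 => (Pi.single p 1 : V K) := by
    funext p
    exact Phi_m K p
  rw [he]
  exact single_li K

end CharZeroPart

end LauferAux

/-- The contraction algebra `K⟨β,γ⟩/(γ³ − β², βγ + γβ)` of the Laufer flop has
dimension 9. -/
theorem dim_contraction_laufer (K : Type*) [Field K] [CharZero K] :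
    Module.finrank K (RingQuot (ConRel K)) = 9 := by
  have B : Module.Basis LauferAux.I3 K (RingQuot (ConRel K)) :=
    Module.Basis.mk (LauferAux.m_li K) (LauferAux.span_top K).ge
  rw [Module.finrank_eq_card_basis B]
  simp [LauferAux.I3]

end
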